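/- Let $f:\mathbb R\to\mathbb R$ be bounded and continuous and $\overline\lambda\ge 0$. For each $\varepsilon\in(0,1]$ let $v^{\varepsilon}:[0,1]\times\mathbb R\to\mathbb R$ be a continuous viscosity solution of $v_t+\tfrac12\big((\overline\lambda^2+\varepsilon^2)v_{xx}^+-\varepsilon^2 v_{xx}^-\big)=0$ on $[0,1)\times\mathbb R$ with $v^{\varepsilon}(1,x)=f(x)$, and assume $\sup_{\varepsilon\in(0,1]}\|v^{\varepsilon}\|_{\infty}<\infty$. Define the upper half-relaxed limit $\overline v(t,x)=\limsup_{(s,y)\to(t,x),\,\varepsilon\to0}v^{\varepsilon}(s,y)$ on $Q=[0,1]\times\mathbb R$. Then $\overline v$ is a bounded upper semicontinuous viscosity subsolution of $v_t+\tfrac12\overline\lambda^2 v_{xx}^+=0$ on $[0,1)\times\mathbb R$, and moreover $\overline v(1,x)=f(x)$ for every $x\in\mathbb R$. -/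

import Mathlib

open Filter

/-- The parabolic cylinder `Q = [0,1] × ℝ`. -/
def QQ : Set (ℝ × ℝ) := Set.Icc (0:ℝ) 1 ×ˢ Set.univ

/-- The Hamiltonian `s ↦ ½((λ̄² + ε²) s⁺ - ε² s⁻)` of the perturbed `G`-heat equation. -/
noncomputable def Geps (lb ε : ℝ) (t : ℝ) : ℝ :=
  (1 / 2) * ((lb ^ 2 + ε ^ 2) * max t 0 - ε ^ 2 * max (-t) 0)

/-- The Hamiltonian `s ↦ ½ λ̄² s⁺` of the limit equation. -/
noncomputable def Glim (lb : ℝ) (t : ℝ) : ℝ := (1 / 2) * (lb ^ 2 * max t 0)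

/-- Viscosity subsolution of `v_t + G(v_xx) = 0` on `Q° = [0,1) × ℝ` with terminal
datum `f`: the terminal inequality and the test-function property at strict local
maximum points of `u - φ` on `Q°`. -/
def IsViscSubsol (G : ℝ → ℝ) (f : ℝ → ℝ) (u : ℝ × ℝ → ℝ) : Prop :=
  (∀ x : ℝ, u (1, x) ≤ f x) ∧
  ∀ φ : ℝ × ℝ → ℝ, ContDiff ℝ 2 φ →
    ∀ z : ℝ × ℝ, z.1 ∈ Set.Ico (0:ℝ) 1 →
      (∃ U ∈ nhds z, ∀ w ∈ U, w.1 ∈ Set.Ico (0:ℝ) 1 → w ≠ z →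
        u w - φ w < u z - φ z) →
      -(deriv (fun t => φ (t, z.2)) z.1)
        - G (deriv (deriv fun x => φ (z.1, x)) z.2) ≤ 0

/-- Viscosity supersolution: strict local minimum points, reversed inequalities. -/
def IsViscSupersol (G : ℝ → ℝ) (f : ℝ → ℝ) (u : ℝ × ℝ → ℝ) : Prop :=
  (∀ x : ℝ, f x ≤ u (1, x)) ∧
  ∀ φ : ℝ × ℝ → ℝ, ContDiff ℝ 2 φ →
    ∀ z : ℝ × ℝ, z.1 ∈ Set.Ico (0:ℝ) 1 →
      (∃ U ∈ nhds z, ∀ w ∈ U, w.1 ∈ Set.Ico (0:ℝ) 1 → w ≠ z →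
        u z - φ z < u w - φ w) →
      0 ≤ -(deriv (fun t => φ (t, z.2)) z.1)
        - G (deriv (deriv fun x => φ (z.1, x)) z.2)

/-- Upper half-relaxed limit `v̄(z) = limsup_{(s,y) → z in Q, ε → 0⁺} v^ε(s,y)`. -/
noncomputable def upperRelaxedLimit (vE : ℝ → ℝ × ℝ → ℝ) (z : ℝ × ℝ) : ℝ :=
  Filter.limsup (fun p : ℝ × (ℝ × ℝ) => vE p.1 p.2)
    ((nhdsWithin 0 (Set.Ioc 0 1)) ×ˢ (nhdsWithin z QQ))


open Filter Set Topology

section Helpers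

noncomputable def pen (c p : ℝ × ℝ) : ℝ := ((p.1 - c.1) ^ 2 + (p.2 - c.2) ^ 2) ^ 2
noncomputable def pder1 (φ : ℝ × ℝ → ℝ) (p : ℝ × ℝ) : ℝ := fderiv ℝ φ p (1, 0)
noncomputable def pderX (φ : ℝ × ℝ → ℝ) (p : ℝ × ℝ) : ℝ := fderiv ℝ φ p (0, 1)
noncomputable def pder2 (φ : ℝ × ℝ → ℝ) (p : ℝ × ℝ) : ℝ := fderiv ℝ (pderX φ) p (0, 1)

lemma hasDerivAt_slice1 {ψ : ℝ × ℝ → ℝ} {s y : ℝ} (h : DifferentiableAt ℝ ψ (s, y)) :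
    HasDerivAt (fun t => ψ (t, y)) (fderiv ℝ ψ (s, y) (1, 0)) s :=
  h.hasFDerivAt.comp_hasDerivAt s ((hasDerivAt_id s).prodMk (hasDerivAt_const s y))

lemma hasDerivAt_slice2 {ψ : ℝ × ℝ → ℝ} {s y : ℝ} (h : DifferentiableAt ℝ ψ (s, y)) :
    HasDerivAt (fun x => ψ (s, x)) (fderiv ℝ ψ (s, y) (0, 1)) y :=
  h.hasFDerivAt.comp_hasDerivAt y ((hasDerivAt_const y s).prodMk (hasDerivAt_id y))

lemma pderX_contDiff {φ : ℝ × ℝ → ℝ} (hφ : ContDiff ℝ 2 φ) : ContDiff ℝ 1 (pderX φ) :=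
  (hφ.fderiv_right (by norm_num)).clm_apply contDiff_const

lemma pder1_continuous {φ : ℝ × ℝ → ℝ} (hφ : ContDiff ℝ 2 φ) : Continuous (pder1 φ) :=
  ((hφ.fderiv_right (m := 1) (by norm_num)).clm_apply contDiff_const).continuous

lemma pder2_continuous {φ : ℝ × ℝ → ℝ} (hφ : ContDiff ℝ 2 φ) : Continuous (pder2 φ) :=
  contDiff_zero.mp (((pderX_contDiff hφ).fderiv_right (m := 0) (by norm_num)).clm_apply
    contDiff_const)

lemma deriv_slice1 {φ : ℝ × ℝ → ℝ} (hφ : ContDiff ℝ 2 φ) (z : ℝ × ℝ) :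
    deriv (fun t => φ (t, z.2)) z.1 = pder1 φ z := by
  have hd : DifferentiableAt ℝ φ (z.1, z.2) := (hφ.differentiable (by norm_num)) (z.1, z.2)
  have := (hasDerivAt_slice1 hd).deriv
  simpa [pder1] using this

lemma deriv_slice_fun {φ : ℝ × ℝ → ℝ} (hφ : ContDiff ℝ 2 φ) (s : ℝ) :
    (deriv fun x => φ (s, x)) = fun x => pderX φ (s, x) := by
  funext x
  exact (hasDerivAt_slice2 ((hφ.differentiable (by norm_num)) (s, x))).deriv

lemma deriv_slice2 {φ : ℝ × ℝ → ℝ} (hφ : ContDiff ℝ 2 φ) (z : ℝ × ℝ) :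
    deriv (deriv fun x => φ (z.1, x)) z.2 = pder2 φ z := by
  rw [deriv_slice_fun hφ]
  have := (hasDerivAt_slice2 (((pderX_contDiff hφ).differentiable one_ne_zero) (z.1, z.2))).deriv
  simpa [pder2] using this

lemma pen_contDiff (c : ℝ × ℝ) : ContDiff ℝ 2 (pen c) := by
  unfold pen
  exact (((contDiff_fst.sub contDiff_const).pow 2).add
    ((contDiff_snd.sub contDiff_const).pow 2)).pow 2

lemma pen_self (c : ℝ × ℝ) : pen c c = 0 := by simp [pen]

lemma pen_pos {c p : ℝ × ℝ} (h : p ≠ c) : 0 < pen c p := by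
  have h' : ¬(p.1 = c.1 ∧ p.2 = c.2) := fun hc => h (Prod.ext_iff.mpr hc)
  have hs : 0 < (p.1 - c.1) ^ 2 + (p.2 - c.2) ^ 2 := by
    rcases not_and_or.mp h' with h1 | h1
    · have h2 : p.1 - c.1 ≠ 0 := sub_ne_zero.mpr h1
      have : (p.1 - c.1) ^ 2 > 0 := by positivity
      nlinarith [sq_nonneg (p.2 - c.2)]
    · have h2 : p.2 - c.2 ≠ 0 := sub_ne_zero.mpr h1
      have : (p.2 - c.2) ^ 2 > 0 := by positivity
      nlinarith [sq_nonneg (p.1 - c.1)]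
  unfold pen; positivity

lemma pen_t (c : ℝ × ℝ) (y : ℝ) :
    HasDerivAt (fun t => ((t - c.1) ^ 2 + (y - c.2) ^ 2) ^ 2) 0 c.1 := by
  have h := ((((hasDerivAt_id c.1).sub_const c.1).pow 2).add_const ((y - c.2) ^ 2)).pow 2
  refine h.congr_deriv ?_
  simp

lemma pen_x (c : ℝ × ℝ) (s x : ℝ) :
    HasDerivAt (fun x' => ((s - c.1) ^ 2 + (x' - c.2) ^ 2) ^ 2)
      (4 * (x - c.2) * ((s - c.1) ^ 2 + (x - c.2) ^ 2)) x := by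
  have h := ((((hasDerivAt_id x).sub_const c.2).pow 2).const_add ((s - c.1) ^ 2)).pow 2
  refine h.congr_deriv ?_
  simp only [id_eq, Pi.pow_apply]
  push_cast
  ring

lemma pen_xx (c : ℝ × ℝ) :
    HasDerivAt (fun x => 4 * (x - c.2) * ((c.1 - c.1) ^ 2 + (x - c.2) ^ 2)) 0 c.2 := by
  have h1 : HasDerivAt (fun x : ℝ => 4 * (x - c.2)) 4 c.2 := by
    simpa using ((hasDerivAt_id c.2).sub_const c.2).const_mul 4
  have h2 := (((hasDerivAt_id c.2).sub_const c.2).pow 2).const_add ((c.1 - c.1) ^ 2)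
  have h3 := h1.mul h2
  refine h3.congr_deriv ?_
  simp

lemma testfun_deriv_t {φ : ℝ × ℝ → ℝ} (hφ : ContDiff ℝ 2 φ) (c : ℝ × ℝ) :
    deriv (fun t => φ (t, c.2) + pen c (t, c.2)) c.1 = pder1 φ c := by
  have hd : DifferentiableAt ℝ φ (c.1, c.2) := (hφ.differentiable (by norm_num)) (c.1, c.2)
  have h1 := hasDerivAt_slice1 hd
  have h2 : HasDerivAt (fun t => pen c (t, c.2)) 0 c.1 := pen_t c c.2
  have := (h1.fun_add h2).deriv
  simpa [pder1] using this

lemma testfun_deriv_xx {φ : ℝ × ℝ → ℝ} (hφ : ContDiff ℝ 2 φ) (c : ℝ × ℝ) :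
    deriv (deriv fun x => φ (c.1, x) + pen c (c.1, x)) c.2 = pder2 φ c := by
  have hfun : (deriv fun x => φ (c.1, x) + pen c (c.1, x))
      = fun x => pderX φ (c.1, x) + 4 * (x - c.2) * ((c.1 - c.1) ^ 2 + (x - c.2) ^ 2) := by
    funext x
    have h1 := hasDerivAt_slice2 ((hφ.differentiable (by norm_num)) (c.1, x))
    have h2 := pen_x c c.1 x
    exact (h1.add h2).deriv
  rw [hfun]
  have h1 := hasDerivAt_slice2 (((pderX_contDiff hφ).differentiable one_ne_zero) (c.1, c.2))
  have h2 := pen_xx c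
  have := (h1.fun_add h2).deriv
  simpa [pder2, pderX] using this

lemma bar_deriv_t (a C2 K x₀ : ℝ) (c : ℝ × ℝ) :
    deriv (fun t => (a + C2 * (c.2 - x₀) ^ 2 + K * (1 - t)) + pen c (t, c.2)) c.1 = -K := by
  have h1 : HasDerivAt (fun t : ℝ => a + C2 * (c.2 - x₀) ^ 2 + K * (1 - t)) (-K) c.1 := by
    have h := (((hasDerivAt_id c.1).const_sub 1).const_mul K).const_add (a + C2 * (c.2 - x₀) ^ 2)
    refine h.congr_deriv ?_
    ring
  have h2 : HasDerivAt (fun t => pen c (t, c.2)) 0 c.1 := pen_t c c.2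
  have := (h1.fun_add h2).deriv
  simpa using this

lemma bar_deriv_xx (a C2 K x₀ : ℝ) (c : ℝ × ℝ) :
    deriv (deriv fun x => (a + C2 * (x - x₀) ^ 2 + K * (1 - c.1)) + pen c (c.1, x)) c.2
      = 2 * C2 := by
  have hfun : (deriv fun x => (a + C2 * (x - x₀) ^ 2 + K * (1 - c.1)) + pen c (c.1, x))
      = fun x => C2 * (2 * (x - x₀)) + 4 * (x - c.2) * ((c.1 - c.1) ^ 2 + (x - c.2) ^ 2) := by
    funext x
    have h1 : HasDerivAt (fun x => a + C2 * (x - x₀) ^ 2 + K * (1 - c.1))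
        (C2 * (2 * (x - x₀))) x := by
      have h := (((((hasDerivAt_id x).sub_const x₀).pow 2).const_mul C2).const_add a).add_const
        (K * (1 - c.1))
      refine h.congr_deriv ?_
      simp only [id_eq]
      push_cast
      ring
    exact (h1.add (pen_x c c.1 x)).deriv
  rw [hfun]
  have h1 : HasDerivAt (fun x : ℝ => C2 * (2 * (x - x₀))) (2 * C2) c.2 := by
    have h := (((hasDerivAt_id c.2).sub_const x₀).const_mul 2).const_mul C2
    refine h.congr_deriv ?_
    ring
  have := (h1.fun_add (pen_xx c)).deriv
  simpa using this

lemma geps_tendsto {lb : ℝ} {e s : ℕ → ℝ} {S : ℝ} (he : Tendsto e atTop (𝓝 0))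
    (hs : Tendsto s atTop (𝓝 S)) :
    Tendsto (fun k => Geps lb (e k) (s k)) atTop (𝓝 (Glim lb S)) := by
  have hG : Continuous (fun q : ℝ × ℝ => Geps lb q.1 q.2) := by
    unfold Geps
    fun_prop
  have h0 : Geps lb 0 S = Glim lb S := by
    simp [Geps, Glim]
  have h2 := (hG.tendsto (0, S)).comp (he.prodMk_nhds hs)
  rw [h0] at h2
  exact h2

lemma QQ_closed : IsClosed QQ := isClosed_Icc.prod isClosed_univ

lemma geps_eval {lb ε C2 : ℝ} (hC2 : 0 ≤ C2) :
    Geps lb ε (2 * C2) = (1 / 2) * ((lb ^ 2 + ε ^ 2) * (2 * C2)) := by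
  have h1 : max (2 * C2) 0 = 2 * C2 := max_eq_left (by linarith)
  have h2 : max (-(2 * C2)) 0 = 0 := max_eq_right (by linarith)
  simp only [Geps, h1, h2]
  ring

end Helpers

/-- If for each `ε ∈ (0,1]` the function `v^ε` is a continuous,
uniformly bounded viscosity solution of
`v_t + ½((λ̄² + ε²) v_xx⁺ - ε² v_xx⁻) = 0` on `[0,1) × ℝ` with `v^ε(1,·) = f`,
then the upper half-relaxed limit `v̄` is a bounded upper semicontinuous viscosity
subsolution of `v_t + ½ λ̄² v_xx⁺ = 0` with terminal datum `f`, and `v̄(1,x) = f(x)`. -/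
theorem stmt_14 (f : ℝ → ℝ) (hfb : ∃ C, ∀ x, |f x| ≤ C) (hfc : Continuous f)
    (lb : ℝ) (hlb : 0 ≤ lb)
    (vE : ℝ → ℝ × ℝ → ℝ)
    (hcont : ∀ ε ∈ Set.Ioc (0:ℝ) 1, ContinuousOn (vE ε) QQ)
    (hbd : ∃ C, ∀ ε ∈ Set.Ioc (0:ℝ) 1, ∀ z ∈ QQ, |vE ε z| ≤ C)
    (hsub : ∀ ε ∈ Set.Ioc (0:ℝ) 1, IsViscSubsol (Geps lb ε) f (vE ε))
    (hsup : ∀ ε ∈ Set.Ioc (0:ℝ) 1, IsViscSupersol (Geps lb ε) f (vE ε))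
    (hterm : ∀ ε ∈ Set.Ioc (0:ℝ) 1, ∀ x : ℝ, vE ε (1, x) = f x) :
    (∃ C, ∀ z ∈ QQ, |upperRelaxedLimit vE z| ≤ C) ∧
    UpperSemicontinuousOn (upperRelaxedLimit vE) QQ ∧
    IsViscSubsol (Glim lb) f (upperRelaxedLimit vE) ∧
    (∀ x : ℝ, upperRelaxedLimit vE (1, x) = f x) := by
  classical
  obtain ⟨Cf, hCf⟩ := hfb
  obtain ⟨Cv, hCv⟩ := hbd
  obtain ⟨M, hM0, hfM, hvM⟩ : ∃ M : ℝ, 0 < M ∧ (∀ x, |f x| ≤ M) ∧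
      ∀ ε ∈ Set.Ioc (0:ℝ) 1, ∀ z ∈ QQ, |vE ε z| ≤ M := by
    refine ⟨|Cf| + |Cv| + 1, by positivity, fun x => le_trans (hCf x) ?_,
      fun ε hε z hz => le_trans (hCv ε hε z hz) ?_⟩
    · have := le_abs_self Cf
      have := abs_nonneg Cv
      linarith
    · have := le_abs_self Cv
      have := abs_nonneg Cf
      linarith
  set uu : ℝ × (ℝ × ℝ) → ℝ := fun p => vE p.1 p.2 with huu
  set FF : (ℝ × ℝ) → Filter (ℝ × (ℝ × ℝ)) :=
    fun z => (𝓝[Set.Ioc (0:ℝ) 1] (0:ℝ)) ×ˢ (𝓝[QQ] z) with hFF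
  have hurl : ∀ z, upperRelaxedLimit vE z = limsup uu (FF z) := fun z => rfl
  haveI hne1 : (𝓝[Set.Ioc (0:ℝ) 1] (0:ℝ)).NeBot := by
    rw [← mem_closure_iff_nhdsWithin_neBot, closure_Ioc (one_ne_zero).symm]
    exact ⟨le_rfl, zero_le_one⟩
  have hne2 : ∀ z ∈ QQ, (𝓝[QQ] z).NeBot := fun z hz =>
    mem_closure_iff_nhdsWithin_neBot.mp (subset_closure hz)
  have hFFne : ∀ z ∈ QQ, (FF z).NeBot := fun z hz => by
    haveI := hne2 z hz
    exact Filter.prod_neBot.mpr ⟨hne1, hne2 z hz⟩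
  have hev : ∀ z : ℝ × ℝ, ∀ᶠ p in FF z, p.1 ∈ Set.Ioc (0:ℝ) 1 ∧ p.2 ∈ QQ := by
    intro z
    have hS : (Set.Ioc (0:ℝ) 1) ×ˢ QQ ∈ FF z :=
      prod_mem_prod self_mem_nhdsWithin self_mem_nhdsWithin
    exact eventually_of_mem hS fun p hp => ⟨hp.1, hp.2⟩
  have hevb : ∀ z : ℝ × ℝ, ∀ᶠ p in FF z, |uu p| ≤ M := fun z =>
    (hev z).mono fun p hp => hvM p.1 hp.1 p.2 hp.2
  have hBdd : ∀ z : ℝ × ℝ, IsBoundedUnder (· ≤ ·) (FF z) uu := fun z =>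
    ⟨M, eventually_map.mpr ((hevb z).mono fun p hp => (abs_le.mp hp).2)⟩
  have hCob : ∀ z ∈ QQ, IsCoboundedUnder (· ≤ ·) (FF z) uu := fun z hz => by
    haveI := hFFne z hz
    exact Filter.isCoboundedUnder_le_of_eventually_le (FF z) (x := -M)
      ((hevb z).mono fun p hp => (abs_le.mp hp).1)
  -- Part 1: boundedness
  have part1 : ∀ z ∈ QQ, |upperRelaxedLimit vE z| ≤ M := by
    intro z hz
    haveI := hFFne z hz
    rw [hurl z, abs_le]
    constructor
    · exact le_limsup_of_frequently_le
        (((hevb z).mono fun p hp => (abs_le.mp hp).1).frequently) (hBdd z)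
    · exact limsup_le_of_le (hCob z hz) ((hevb z).mono fun p hp => (abs_le.mp hp).2)
  -- Part 2: upper semicontinuity
  have part2 : UpperSemicontinuousOn (upperRelaxedLimit vE) QQ := by
    intro z hz c hc
    haveI := hFFne z hz
    obtain ⟨c', hc1, hc2⟩ : ∃ c', upperRelaxedLimit vE z < c' ∧ c' < c :=
      ⟨(upperRelaxedLimit vE z + c) / 2, by linarith, by linarith⟩
    have hev2 : ∀ᶠ p in FF z, uu p < c' := by
      rw [hurl z] at hc1
      exact eventually_lt_of_limsup_lt hc1 (hBdd z)
    obtain ⟨S, hS, T, hT, hST⟩ := Filter.mem_prod_iff.mp hev2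
    obtain ⟨O, hOopen, hzO, hOT⟩ := mem_nhdsWithin.mp hT
    have hOev : ∀ᶠ w in 𝓝[QQ] z, w ∈ O :=
      eventually_of_mem (nhdsWithin_le_nhds (hOopen.mem_nhds hzO)) fun w hw => hw
    filter_upwards [hOev, eventually_mem_nhdsWithin] with w hwO hwQ
    refine lt_of_le_of_lt ?_ hc2
    rw [hurl w]
    refine limsup_le_of_le (hCob w hwQ) ?_
    have hmem : S ×ˢ (O ∩ QQ) ∈ FF w :=
      prod_mem_prod hS (inter_mem (nhdsWithin_le_nhds (hOopen.mem_nhds hwO))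
        self_mem_nhdsWithin)
    exact eventually_of_mem hmem fun p hp =>
      le_of_lt (hST (Set.mk_mem_prod hp.1 (hOT hp.2)))
  -- terminal lower bound
  have hterm_ge : ∀ x : ℝ, f x ≤ upperRelaxedLimit vE (1, x) := by
    intro x
    have hmem : ((1:ℝ), x) ∈ QQ := ⟨⟨zero_le_one, le_rfl⟩, trivial⟩
    haveI := hne2 _ hmem
    set Fp : Filter (ℝ × (ℝ × ℝ)) :=
      (𝓝[Set.Ioc (0:ℝ) 1] (0:ℝ)) ×ˢ (pure ((1:ℝ), x)) with hFp
    haveI : Fp.NeBot := Filter.prod_neBot.mpr ⟨hne1, pure_neBot⟩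
    have hle : Fp ≤ FF (1, x) := Filter.prod_mono le_rfl (pure_le_nhdsWithin hmem)
    have hevc : ∀ᶠ q in Fp, uu q = f x := by
      have hmem2 : (Set.Ioc (0:ℝ) 1) ×ˢ ({((1:ℝ), x)} : Set (ℝ × ℝ)) ∈ Fp :=
        prod_mem_prod self_mem_nhdsWithin (by simp)
      refine eventually_of_mem hmem2 fun q hq => ?_
      have h2 : q.2 = ((1:ℝ), x) := by simpa using hq.2
      show vE q.1 q.2 = f x
      rw [h2]
      exact hterm q.1 hq.1 x
    have heq : limsup uu Fp = f x := by
      rw [limsup_congr hevc, limsup_const]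
    rw [hurl (1, x), ← heq]
    exact limsup_le_limsup_of_le hle
      (Filter.isCoboundedUnder_le_of_eventually_le Fp (x := f x)
        (hevc.mono fun q hq => hq.ge))
      (hBdd (1, x))
  -- the barrier estimate
  have barrier : ∀ x₀ η : ℝ, 0 < η → ∃ C2 K : ℝ, 0 ≤ C2 ∧ 0 ≤ K ∧
      ∀ ε ∈ Set.Ioc (0:ℝ) 1, ∀ z ∈ QQ,
        vE ε z ≤ f x₀ + η + C2 * (z.2 - x₀) ^ 2 + K * (1 - z.1) := by
    intro x₀ η hη
    obtain ⟨r, hr, hfr⟩ : ∃ r > 0, ∀ x, |x - x₀| ≤ r → f x ≤ f x₀ + η := by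
      obtain ⟨δ, hδ, h⟩ := Metric.continuous_iff.mp hfc x₀ η hη
      refine ⟨δ / 2, by positivity, fun x hx => ?_⟩
      have h2 := h x (by rw [Real.dist_eq]; linarith)
      rw [Real.dist_eq] at h2
      have := (abs_le.mp h2.le).2
      linarith
    obtain ⟨C2, hC2, hC2r⟩ : ∃ C2 : ℝ, 0 < C2 ∧ C2 * r ^ 2 = 2 * M := by
      refine ⟨2 * M / r ^ 2, by positivity, ?_⟩
      field_simp
    obtain ⟨K, hK, hKeq⟩ : ∃ K : ℝ, 0 < K ∧ K = (lb ^ 2 + 1) * C2 + 1 :=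
      ⟨(lb ^ 2 + 1) * C2 + 1, by positivity, rfl⟩
    have hfg : ∀ x, f x ≤ f x₀ + η + C2 * (x - x₀) ^ 2 := by
      intro x
      by_cases hx : |x - x₀| ≤ r
      · have h1 := hfr x hx
        have h2 : 0 ≤ C2 * (x - x₀) ^ 2 := by positivity
        linarith
      · push_neg at hx
        have h1 : r ^ 2 ≤ (x - x₀) ^ 2 := by
          have := sq_abs (x - x₀)
          nlinarith [abs_nonneg (x - x₀)]
        have h2 : 2 * M ≤ C2 * (x - x₀) ^ 2 := by
          calc 2 * M = C2 * r ^ 2 := hC2r.symm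
          _ ≤ C2 * (x - x₀) ^ 2 := by nlinarith
        have h3 := (abs_le.mp (hfM x)).2
        have h4 := (abs_le.mp (hfM x₀)).1
        linarith
    refine ⟨C2, K, hC2.le, hK.le, ?_⟩
    intro ε hε
    obtain ⟨w, hwdef⟩ : ∃ w : ℝ × ℝ → ℝ,
        w = fun p => f x₀ + η + C2 * (p.2 - x₀) ^ 2 + K * (1 - p.1) := ⟨_, rfl⟩
    have hwap : ∀ p : ℝ × ℝ, w p = f x₀ + η + C2 * (p.2 - x₀) ^ 2 + K * (1 - p.1) :=
      fun p => by rw [hwdef]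
    suffices hsuf : ∀ z ∈ QQ, vE ε z ≤ w z by
      intro z hz
      have := hsuf z hz
      rw [hwap z] at this
      exact this
    have hwc : Continuous w := by
      rw [hwdef]
      fun_prop
    obtain ⟨R, hRpos, hR2⟩ : ∃ R : ℝ, 0 < R ∧ C2 * R ^ 2 = 2 * M + η + 1 := by
      refine ⟨Real.sqrt ((2 * M + η + 1) / C2), Real.sqrt_pos.mpr (by positivity), ?_⟩
      rw [Real.sq_sqrt (by positivity)]
      field_simp
    have hout : ∀ p ∈ QQ, R ≤ |p.2 - x₀| → vE ε p - w p ≤ -(2 * η + 1) := by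
      intro p hp hRp
      have h1 : R ^ 2 ≤ (p.2 - x₀) ^ 2 := by
        have := sq_abs (p.2 - x₀)
        nlinarith [abs_nonneg (p.2 - x₀)]
      have h2 : 2 * M + η + 1 ≤ C2 * (p.2 - x₀) ^ 2 := by
        calc 2 * M + η + 1 = C2 * R ^ 2 := hR2.symm
        _ ≤ C2 * (p.2 - x₀) ^ 2 := by nlinarith
      have h3 : 0 ≤ K * (1 - p.1) := by
        have := hp.1.2
        nlinarith
      have h4 := (abs_le.mp (hvM ε hε p hp)).2
      have h5 := (abs_le.mp (hfM x₀)).1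
      rw [hwap p]
      linarith
    obtain ⟨KR, hKRdef⟩ : ∃ KR : Set (ℝ × ℝ),
        KR = Set.Icc (0:ℝ) 1 ×ˢ Set.Icc (x₀ - R) (x₀ + R) := ⟨_, rfl⟩
    have hKRQQ : KR ⊆ QQ := by
      rw [hKRdef]
      exact fun p hp => ⟨hp.1, trivial⟩
    have h1x0 : ((1:ℝ), x₀) ∈ KR := by
      rw [hKRdef]
      exact ⟨⟨zero_le_one, le_rfl⟩, ⟨by linarith, by linarith⟩⟩
    have hKRmem : ∀ p : ℝ × ℝ, p ∈ KR ↔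
        (p.1 ∈ Set.Icc (0:ℝ) 1 ∧ p.2 ∈ Set.Icc (x₀ - R) (x₀ + R)) := by
      rw [hKRdef]
      intro p
      exact Set.mem_prod
    have hKRcomp : IsCompact KR := by
      rw [hKRdef]
      exact isCompact_Icc.prod isCompact_Icc
    have hgc : ContinuousOn (fun p => vE ε p - w p) KR :=
      ((hcont ε hε).mono hKRQQ).sub hwc.continuousOn
    obtain ⟨zh, hzhK, hzhmax⟩ := hKRcomp.exists_isMaxOn ⟨(1, x₀), h1x0⟩ hgc
    have hzhQQ : zh ∈ QQ := hKRQQ hzhK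
    have hmax : ∀ q ∈ KR, vE ε q - w q ≤ vE ε zh - w zh := fun q hq => hzhmax hq
    have hg1x0 : vE ε (1, x₀) - w (1, x₀) = -η := by
      rw [hterm ε hε x₀, hwap (1, x₀)]
      norm_num
    have hgzh : -η ≤ vE ε zh - w zh := hg1x0 ▸ hmax (1, x₀) h1x0
    have hglobal : ∀ p ∈ QQ, vE ε p - w p ≤ vE ε zh - w zh := by
      intro p hp
      by_cases hpK : p ∈ KR
      · exact hmax p hpK
      · have hpx : R ≤ |p.2 - x₀| := by
          by_contra hcon
          push_neg at hcon
          rcases abs_le.mp hcon.le with ⟨ha, hb⟩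
          exact hpK ((hKRmem p).mpr ⟨hp.1, ⟨by linarith, by linarith⟩⟩)
        have := hout p hp hpx
        linarith
    have hzhK' := (hKRmem zh).mp hzhK
    have hzh1 : zh.1 ≤ 1 := hzhK'.1.2
    rcases eq_or_lt_of_le hzh1 with h1 | h1
    · -- max on the terminal boundary
      intro z hz
      have hzheq : vE ε zh = f zh.2 := by
        have : zh = (1, zh.2) := by
          rw [← h1]
        rw [this, hterm ε hε zh.2]
      have hwzh : w zh = f x₀ + η + C2 * (zh.2 - x₀) ^ 2 := by
        rw [hwap zh, ← h1]
        ring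
      have h2 : vE ε zh - w zh ≤ 0 := by
        rw [hzheq, hwzh]
        have := hfg zh.2
        linarith
      have := hglobal z hz
      linarith
    · -- interior maximum: contradiction with the subsolution property
      exfalso
      have hφbCD : ContDiff ℝ 2
          (fun p : ℝ × ℝ => (f x₀ + η + C2 * (p.2 - x₀) ^ 2 + K * (1 - p.1)) + pen zh p) := by
        refine ContDiff.add ?_ (pen_contDiff zh)
        fun_prop
      have hzh0 : zh.1 ∈ Set.Ico (0:ℝ) 1 := ⟨hzhK'.1.1, h1⟩
      have hstrict : ∃ U ∈ nhds zh, ∀ p ∈ U, p.1 ∈ Set.Ico (0:ℝ) 1 → p ≠ zh →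
          vE ε p - ((f x₀ + η + C2 * (p.2 - x₀) ^ 2 + K * (1 - p.1)) + pen zh p) <
          vE ε zh - ((f x₀ + η + C2 * (zh.2 - x₀) ^ 2 + K * (1 - zh.1)) + pen zh zh) := by
        refine ⟨Set.univ, univ_mem, fun p _ hpI hpne => ?_⟩
        have hpQQ : p ∈ QQ := ⟨⟨hpI.1, hpI.2.le⟩, trivial⟩
        have h2 := hglobal p hpQQ
        rw [hwap p, hwap zh] at h2
        have h3 := pen_pos hpne
        have h4 := pen_self zh
        linarith
      have htest := (hsub ε hε).2
        (fun p : ℝ × ℝ => (f x₀ + η + C2 * (p.2 - x₀) ^ 2 + K * (1 - p.1)) + pen zh p)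
        hφbCD zh hzh0 hstrict
      have e1 : deriv (fun t =>
          ((f x₀ + η) + C2 * (zh.2 - x₀) ^ 2 + K * (1 - t)) + pen zh (t, zh.2)) zh.1 = -K :=
        bar_deriv_t (f x₀ + η) C2 K x₀ zh
      have e2 : deriv (deriv fun x =>
          ((f x₀ + η) + C2 * (x - x₀) ^ 2 + K * (1 - zh.1)) + pen zh (zh.1, x)) zh.2
          = 2 * C2 := bar_deriv_xx (f x₀ + η) C2 K x₀ zh
      rw [show (f x₀ + η) + C2 * (zh.2 - x₀) ^ 2 = f x₀ + η + C2 * (zh.2 - x₀) ^ 2 from rfl]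
        at e1
      rw [e1, e2, geps_eval hC2.le] at htest
      have hε2 : ε ^ 2 ≤ 1 := by nlinarith [hε.1, hε.2]
      have hmul : (lb ^ 2 + ε ^ 2) * C2 ≤ (lb ^ 2 + 1) * C2 :=
        mul_le_mul_of_nonneg_right (by linarith) hC2.le
      rw [hKeq] at htest
      nlinarith [htest, hmul]
  -- terminal upper bound
  have hterm_le : ∀ x₀ : ℝ, upperRelaxedLimit vE (1, x₀) ≤ f x₀ := by
    intro x₀
    have hmem : ((1:ℝ), x₀) ∈ QQ := ⟨⟨zero_le_one, le_rfl⟩, trivial⟩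
    haveI := hFFne _ hmem
    refine le_of_forall_pos_le_add fun η hη => ?_
    obtain ⟨C2, K, hC2, hK, hb⟩ := barrier x₀ η hη
    set w : ℝ × ℝ → ℝ := fun p => f x₀ + η + C2 * (p.2 - x₀) ^ 2 + K * (1 - p.1) with hwdef
    have hwc : Continuous w := by
      rw [hwdef]
      fun_prop
    have htd : Tendsto (fun p : ℝ × (ℝ × ℝ) => w p.2) (FF (1, x₀)) (𝓝 (w (1, x₀))) := by
      refine (hwc.tendsto (1, x₀)).comp ?_
      exact tendsto_snd.mono_right nhdsWithin_le_nhds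
    have hles : limsup uu (FF (1, x₀)) ≤ limsup (fun p : ℝ × (ℝ × ℝ) => w p.2) (FF (1, x₀)) :=
      limsup_le_limsup ((hev _).mono fun p hp => hb p.1 hp.1 p.2 hp.2)
        (hCob _ hmem) htd.isBoundedUnder_le
    rw [htd.limsup_eq] at hles
    have hw1 : w (1, x₀) = f x₀ + η := by
      simp [hwdef]
    rw [hurl (1, x₀)]
    rw [hw1] at hles
    exact hles
  -- the subsolution test property for the relaxed limit
  have part3b : ∀ φ : ℝ × ℝ → ℝ, ContDiff ℝ 2 φ →
      ∀ z : ℝ × ℝ, z.1 ∈ Set.Ico (0:ℝ) 1 →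
        (∃ U ∈ nhds z, ∀ w ∈ U, w.1 ∈ Set.Ico (0:ℝ) 1 → w ≠ z →
          upperRelaxedLimit vE w - φ w < upperRelaxedLimit vE z - φ z) →
        -(deriv (fun t => φ (t, z.2)) z.1)
          - Glim lb (deriv (deriv fun x => φ (z.1, x)) z.2) ≤ 0 := by
    intro φ hφ z hz hstr
    obtain ⟨U, hU, hstrict⟩ := hstr
    have hzQQ : z ∈ QQ := ⟨⟨hz.1, hz.2.le⟩, trivial⟩
    haveI := hFFne z hzQQ
    rw [deriv_slice1 hφ z, deriv_slice2 hφ z]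
    obtain ⟨ρ₀, hρ₀, hρU⟩ := Metric.nhds_basis_closedBall.mem_iff.mp hU
    set ρ : ℝ := min ρ₀ ((1 - z.1) / 2) with hρdef
    have hρ : 0 < ρ := lt_min hρ₀ (by linarith [hz.2])
    have hρ1 : z.1 + ρ < 1 := by
      have h1 : ρ ≤ (1 - z.1) / 2 := min_le_right _ _
      linarith [hz.2]
    have hρU' : Metric.closedBall z ρ ⊆ U :=
      le_trans (Metric.closedBall_subset_closedBall (min_le_left _ _)) hρU
    set tlo : ℝ := max (z.1 - ρ) 0 with htlodef
    set K : Set (ℝ × ℝ) := Set.Icc tlo (z.1 + ρ) ×ˢ Set.Icc (z.2 - ρ) (z.2 + ρ) with hKdef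
    have hKQQ : K ⊆ QQ := by
      intro p hp
      exact ⟨⟨le_trans (le_max_right _ _) hp.1.1, le_trans hp.1.2 hρ1.le⟩, trivial⟩
    have hKU : K ⊆ U := by
      intro p hp
      refine hρU' ?_
      rw [Metric.mem_closedBall, Prod.dist_eq]
      refine max_le ?_ ?_
      · rw [Real.dist_eq, abs_le]
        constructor
        · have := le_trans (le_max_left _ _) hp.1.1
          linarith
        · linarith [hp.1.2]
      · rw [Real.dist_eq, abs_le]
        constructor
        · linarith [hp.2.1]
        · linarith [hp.2.2]
    have hzK : z ∈ K := by
      refine ⟨⟨max_le (by linarith) hz.1, by linarith⟩, ⟨by linarith, by linarith⟩⟩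
    have hKcomp : IsCompact K := isCompact_Icc.prod isCompact_Icc
    have hballK : ∀ p ∈ QQ, dist p z < ρ → p ∈ K := by
      intro p hp hd
      rw [Prod.dist_eq, max_lt_iff, Real.dist_eq, Real.dist_eq] at hd
      obtain ⟨hd1, hd2⟩ := hd
      rw [abs_lt] at hd1 hd2
      refine ⟨⟨max_le (by linarith) hp.1.1, by linarith⟩, ⟨by linarith, by linarith⟩⟩
    -- select approximating points
    have hsel : ∀ n : ℕ, ∃ ee : ℝ, ∃ pp : ℝ × ℝ, ee ∈ Set.Ioc (0:ℝ) 1 ∧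
        ee < 1 / (n + 1) ∧ pp ∈ QQ ∧ dist pp z < 1 / (n + 1) ∧
        upperRelaxedLimit vE z - 1 / (n + 1) < vE ee pp := by
      intro n
      have hpos : (0:ℝ) < 1 / (n + 1) := by positivity
      have hfr : ∃ᶠ q in FF z, upperRelaxedLimit vE z - 1 / (n + 1) < uu q := by
        refine frequently_lt_of_lt_limsup (hCob z hzQQ) ?_
        rw [hurl z] at *
        linarith
      have hS : (Set.Ioc (0:ℝ) 1 ∩ Set.Iio (1 / (n + 1))) ×ˢ
          (QQ ∩ Metric.ball z (1 / (n + 1))) ∈ FF z :=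
        prod_mem_prod
          (inter_mem self_mem_nhdsWithin (nhdsWithin_le_nhds (Iio_mem_nhds hpos)))
          (inter_mem self_mem_nhdsWithin (nhdsWithin_le_nhds (Metric.ball_mem_nhds z hpos)))
      obtain ⟨q, hlt, hqS⟩ := (hfr.and_eventually (eventually_of_mem hS fun q hq => hq)).exists
      exact ⟨q.1, q.2, hqS.1.1, hqS.1.2, hqS.2.1, hqS.2.2, hlt⟩
    choose e p he1 he2 hpQ hpd hplow using hsel
    -- maximum points over K
    have hmaxsel : ∀ n : ℕ, ∃ zM ∈ K, ∀ q ∈ K, vE (e n) q - φ q ≤ vE (e n) zM - φ zM := by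
      intro n
      obtain ⟨zM, hzM, hmax⟩ := hKcomp.exists_isMaxOn ⟨z, hzK⟩
        (((hcont (e n) (he1 n)).mono hKQQ).sub hφ.continuous.continuousOn)
      exact ⟨zM, hzM, fun q hq => hmax hq⟩
    choose zM hzMK hzMmax using hmaxsel
    obtain ⟨q0, hq0K, ψ, hψmono, hψtend⟩ := hKcomp.tendsto_subseq hzMK
    have hψtop : Tendsto ψ atTop atTop := hψmono.tendsto_atTop
    have honeψ : Tendsto (fun k => 1 / ((ψ k : ℝ) + 1)) atTop (𝓝 0) :=
      tendsto_one_div_add_atTop_nhds_zero_nat.comp hψtop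
    have hetend : Tendsto (fun k => e (ψ k)) atTop (𝓝 0) :=
      tendsto_of_tendsto_of_tendsto_of_le_of_le tendsto_const_nhds honeψ
        (fun k => (he1 (ψ k)).1.le) (fun k => (he2 (ψ k)).le)
    have hφc : Continuous φ := hφ.continuous
    have hzMQQ : ∀ n, zM n ∈ QQ := fun n => hKQQ (hzMK n)
    have hq0QQ : q0 ∈ QQ := hKQQ hq0K
    have hGtend : Tendsto (fun k => ((e (ψ k)), zM (ψ k))) atTop (FF q0) := by
      refine Tendsto.prodMk ?_ ?_
      · rw [tendsto_nhdsWithin_iff]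
        exact ⟨hetend, Eventually.of_forall fun k => he1 (ψ k)⟩
      · rw [tendsto_nhdsWithin_iff]
        exact ⟨hψtend, Eventually.of_forall fun k => hzMQQ (ψ k)⟩
    have hrbound : ∀ k, |vE (e (ψ k)) (zM (ψ k))| ≤ M :=
      fun k => hvM _ (he1 (ψ k)) _ (hzMQQ (ψ k))
    have hrble : limsup (fun k => vE (e (ψ k)) (zM (ψ k))) atTop ≤
        limsup uu (FF q0) := by
      have hcomp : limsup (fun k => vE (e (ψ k)) (zM (ψ k))) atTop
          = limsup uu (map (fun k => ((e (ψ k)), zM (ψ k))) atTop) :=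
        limsup_comp uu (fun k => ((e (ψ k)), zM (ψ k))) atTop
      rw [hcomp]
      refine limsup_le_limsup_of_le hGtend ?_ (hBdd q0)
      refine Filter.isCoboundedUnder_le_of_eventually_le _ (x := -M) ?_
      rw [eventually_map]
      exact Eventually.of_forall fun k => (abs_le.mp (hrbound k)).1
    haveI := hFFne q0 hq0QQ
    have hq0 : q0 = z := by
      by_contra hne
      have hq01 : q0.1 ∈ Set.Ico (0:ℝ) 1 :=
        ⟨le_trans (le_max_right _ _) hq0K.1.1, lt_of_le_of_lt hq0K.1.2 hρ1⟩
      have hlt : upperRelaxedLimit vE q0 - φ q0 < upperRelaxedLimit vE z - φ z :=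
        hstrict q0 (hKU hq0K) hq01 hne
      set cc : ℕ → ℝ := fun k => upperRelaxedLimit vE z - 1 / ((ψ k : ℝ) + 1)
        - φ (p (ψ k)) + φ (zM (ψ k)) with hcc
      have hptend : Tendsto (fun k => p (ψ k)) atTop (𝓝 z) := by
        rw [tendsto_iff_dist_tendsto_zero]
        exact tendsto_of_tendsto_of_tendsto_of_le_of_le tendsto_const_nhds honeψ
          (fun k => dist_nonneg) (fun k => (hpd (ψ k)).le)
      have hctend : Tendsto cc atTop
          (𝓝 (upperRelaxedLimit vE z - φ z + φ q0)) := by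
        have h1 : Tendsto (fun k => upperRelaxedLimit vE z - 1 / ((ψ k : ℝ) + 1)) atTop
            (𝓝 (upperRelaxedLimit vE z)) := by
          have h0 : Tendsto (fun _ : ℕ => upperRelaxedLimit vE z) atTop
              (𝓝 (upperRelaxedLimit vE z)) := tendsto_const_nhds
          simpa using h0.sub honeψ
        have h2 : Tendsto (fun k => φ (p (ψ k))) atTop (𝓝 (φ z)) :=
          (hφc.tendsto z).comp hptend
        have h3 : Tendsto (fun k => φ (zM (ψ k))) atTop (𝓝 (φ q0)) :=
          (hφc.tendsto q0).comp hψtend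
        exact (h1.sub h2).add h3
      have hck : ∀ᶠ k in atTop, cc k ≤ vE (e (ψ k)) (zM (ψ k)) := by
        have hev3 : ∀ᶠ k in atTop, 1 / ((ψ k : ℝ) + 1) < ρ := honeψ.eventually_lt_const hρ
        filter_upwards [hev3] with k hk
        have hpK : p (ψ k) ∈ K := hballK _ (hpQ (ψ k)) (lt_trans (hpd (ψ k)) hk)
        have h1 := hzMmax (ψ k) (p (ψ k)) hpK
        have h2 := hplow (ψ k)
        simp only [hcc]
        linarith
      have hfin : upperRelaxedLimit vE z - φ z + φ q0 ≤ limsup uu (FF q0) := by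
        rw [← hctend.limsup_eq]
        refine le_trans (limsup_le_limsup hck ?_ ?_) hrble
        · exact hctend.isBoundedUnder_ge.isCoboundedUnder_le
        · exact ⟨M, eventually_map.mpr
            (Eventually.of_forall fun k => (abs_le.mp (hrbound k)).2)⟩
      rw [← hurl q0] at hfin
      linarith
    rw [hq0] at hψtend
    -- eventually interior, apply the epsilon-subsolution test
    set U' : Set (ℝ × ℝ) :=
      Set.Ioo (z.1 - ρ) (z.1 + ρ) ×ˢ Set.Ioo (z.2 - ρ) (z.2 + ρ) with hU'def
    have hU'open : IsOpen U' := isOpen_Ioo.prod isOpen_Ioo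
    have hzU' : z ∈ U' := ⟨⟨by linarith, by linarith⟩, ⟨by linarith, by linarith⟩⟩
    have hint : ∀ᶠ k in atTop, zM (ψ k) ∈ U' :=
      hψtend.eventually (hU'open.mem_nhds hzU')
    have hconc : ∀ᶠ k in atTop,
        -(pder1 φ (zM (ψ k))) - Geps lb (e (ψ k)) (pder2 φ (zM (ψ k))) ≤ 0 := by
      filter_upwards [hint] with k hk
      set c : ℝ × ℝ := zM (ψ k) with hcdef
      have hc1 : c.1 ∈ Set.Ico (0:ℝ) 1 :=
        ⟨le_trans (le_max_right _ _) (hzMK (ψ k)).1.1,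
          lt_of_le_of_lt (hzMK (ψ k)).1.2 hρ1⟩
      have hstrict2 : ∃ V ∈ nhds c, ∀ q ∈ V, q.1 ∈ Set.Ico (0:ℝ) 1 → q ≠ c →
          vE (e (ψ k)) q - (φ q + pen c q) < vE (e (ψ k)) c - (φ c + pen c c) := by
        refine ⟨U', hU'open.mem_nhds hk, fun q hqU hqI hqne => ?_⟩
        have hqK : q ∈ K := by
          refine ⟨⟨max_le (le_of_lt hqU.1.1) hqI.1, (le_of_lt hqU.1.2)⟩,
            ⟨le_of_lt hqU.2.1, le_of_lt hqU.2.2⟩⟩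
        have h1 := hzMmax (ψ k) q hqK
        have h2 := pen_pos hqne
        have h3 := pen_self c
        linarith
      have htest := (hsub (e (ψ k)) (he1 (ψ k))).2 (fun q => φ q + pen c q)
        (hφ.add (pen_contDiff c)) c hc1 hstrict2
      rw [← testfun_deriv_t hφ c, ← testfun_deriv_xx hφ c]
      exact htest
    have hlim : Tendsto
        (fun k => -(pder1 φ (zM (ψ k))) - Geps lb (e (ψ k)) (pder2 φ (zM (ψ k))))
        atTop (𝓝 (-(pder1 φ z) - Glim lb (pder2 φ z))) := by
      refine Tendsto.sub ?_ ?_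
      · exact (((pder1_continuous hφ).tendsto z).comp hψtend).neg
      · exact geps_tendsto hetend (((pder2_continuous hφ).tendsto z).comp hψtend)
    exact le_of_tendsto hlim hconc
  refine ⟨⟨M, part1⟩, part2, ⟨fun x => le_trans ?_ le_rfl, part3b⟩, fun x =>
    le_antisymm (hterm_le x) (hterm_ge x)⟩
  exact hterm_le x
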